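/- Let 0 < q < 1/2. Then the two-dimensional Lebesgue measure of the set of pairs (T,S) ∈ (1,2) × (−1,0) for which the polynomial P_{q,T,S}(x) = (T+S−1)x³ + (1−T−2S+q(S−1−T))x² + (S+q(T−S))x has exactly 2 distinct roots in the interval [0,1] equals 3q/(2(1−q)) if 0 < q ≤ 1/3, and equals 3 − 1/(2q(1−q)) if 1/3 ≤ q < 1/2. -/

import Mathlib

open MeasureTheory Set

/-- The cubic whose roots in `[0,1]` are the equilibria of the replicator–mutator
dynamics for the pairwise social dilemma with payoffs `a₁₁ = 1, a₁₂ = S, a₂₁ = T, a₂₂ = 0`. -/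
noncomputable def P (q T S x : ℝ) : ℝ :=
  (T + S - 1) * x ^ 3 + (1 - T - 2 * S + q * (S - 1 - T)) * x ^ 2 + (S + q * (T - S)) * x

/-- Number of distinct roots of `P q T S` in the interval `[0,1]`. -/
noncomputable def nRoots (q T S : ℝ) : ℕ :=
  {x : ℝ | x ∈ Set.Icc (0 : ℝ) 1 ∧ P q T S x = 0}.ncard

/-- Vieta-style identity for two distinct roots of a quadratic. -/
lemma key_id {a b c r₁ r₂ : ℝ} (hne : r₁ ≠ r₂)
    (e1 : a * r₁ ^ 2 + b * r₁ + c = 0) (e2 : a * r₂ ^ 2 + b * r₂ + c = 0) :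
    c * (a + b + c) = a ^ 2 * (r₁ * r₂ * (1 - r₁) * (1 - r₂)) := by
  have h3 : (r₁ - r₂) * (a * (r₁ + r₂) + b) = 0 := by linear_combination e1 - e2
  have h4 : b = -(a * (r₁ + r₂)) := by
    rcases mul_eq_zero.1 h3 with h | h
    · exact absurd (sub_eq_zero.1 h) hne
    · linarith
  have h5 : c = a * r₁ * r₂ := by linear_combination e1 - r₁ * h4
  rw [h5, h4]; ring

lemma at_most_one_root {a b c q r₁ r₂ : ℝ} (hq : 0 < q) (hsum : a + b + c = -q) (hc : 0 < c)
    (h1 : r₁ ∈ Icc (0:ℝ) 1) (h2 : r₂ ∈ Icc (0:ℝ) 1)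
    (e1 : a * r₁ ^ 2 + b * r₁ + c = 0) (e2 : a * r₂ ^ 2 + b * r₂ + c = 0) : r₁ = r₂ := by
  by_contra hne
  have key := key_id hne e1 e2
  rw [hsum] at key
  have hnn : 0 ≤ r₁ * r₂ * (1 - r₁) * (1 - r₂) :=
    mul_nonneg (mul_nonneg (mul_nonneg h1.1 h2.1) (by linarith [h1.2])) (by linarith [h2.2])
  nlinarith [mul_pos hc hq, mul_nonneg (sq_nonneg a) hnn]

lemma P_factor (q T S x : ℝ) :
    P q T S x = x * ((T + S - 1) * x ^ 2 + (1 - T - 2 * S + q * (S - 1 - T)) * x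
      + (S + q * (T - S))) := by
  simp only [P]; ring

lemma nRoots_eq_two_of_pos {q T S : ℝ} (hq0 : 0 < q)
    (hc : 0 < S + q * (T - S)) : nRoots q T S = 2 := by
  set a : ℝ := T + S - 1 with ha
  set b : ℝ := 1 - T - 2 * S + q * (S - 1 - T) with hb
  set c : ℝ := S + q * (T - S) with hcdef
  have hsum : a + b + c = -q := by rw [ha, hb, hcdef]; ring
  have hcont : Continuous fun x : ℝ => a * x ^ 2 + b * x + c := by continuity
  have h0 : (0:ℝ) ∈ Ioo ((fun x : ℝ => a * x ^ 2 + b * x + c) 1)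
      ((fun x : ℝ => a * x ^ 2 + b * x + c) 0) := by
    constructor
    · show a * 1 ^ 2 + b * 1 + c < 0; nlinarith
    · show 0 < a * 0 ^ 2 + b * 0 + c; nlinarith
  obtain ⟨r, hrIoo, hQr⟩ :=
    intermediate_value_Ioo' (by norm_num : (0:ℝ) ≤ 1) hcont.continuousOn h0
  simp only at hQr
  have hseteq : {x : ℝ | x ∈ Set.Icc (0:ℝ) 1 ∧ P q T S x = 0} = {0, r} := by
    ext x
    simp only [Set.mem_setOf_eq, Set.mem_insert_iff, Set.mem_singleton_iff]
    constructor
    · rintro ⟨hx, hPx⟩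
      rw [P_factor] at hPx
      rcases mul_eq_zero.1 hPx with h | h
      · exact Or.inl h
      · exact Or.inr (at_most_one_root hq0 hsum hc hx (Set.mem_Icc_of_Ioo hrIoo) h hQr)
    · rintro (rfl | rfl)
      · exact ⟨by norm_num, by simp [P]⟩
      · exact ⟨Set.mem_Icc_of_Ioo hrIoo, by rw [P_factor, hQr, mul_zero]⟩
  rw [nRoots, hseteq]
  exact Set.ncard_pair (ne_of_lt hrIoo.1)

lemma disc_eq_zero_of {q T S : ℝ} (hq0 : 0 < q)
    (hc : S + q * (T - S) < 0) (ha0 : T + S - 1 ≠ 0) (hn : nRoots q T S = 2) :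
    (1 - T - 2 * S + q * (S - 1 - T)) ^ 2 - 4 * (T + S - 1) * (S + q * (T - S)) = 0 := by
  set a : ℝ := T + S - 1 with ha
  set b : ℝ := 1 - T - 2 * S + q * (S - 1 - T) with hb
  set c : ℝ := S + q * (T - S) with hcdef
  have hsum : a + b + c = -q := by rw [ha, hb, hcdef]; ring
  obtain ⟨x, y, hxy, hset⟩ := Set.ncard_eq_two.1 hn
  have h0mem : (0:ℝ) ∈ {x : ℝ | x ∈ Set.Icc (0:ℝ) 1 ∧ P q T S x = 0} :=
    ⟨by norm_num, by simp [P]⟩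
  -- get the nonzero root r
  obtain ⟨r, hr0, hrset⟩ : ∃ r : ℝ, r ≠ 0 ∧
      {x : ℝ | x ∈ Set.Icc (0:ℝ) 1 ∧ P q T S x = 0} = {0, r} := by
    rw [hset] at h0mem
    rcases h0mem with rfl | rfl
    · exact ⟨y, fun h => hxy h.symm, by rw [hset]⟩
    · exact ⟨x, fun h => hxy h, by rw [hset, Set.pair_comm]⟩
  have hrmem : r ∈ {x : ℝ | x ∈ Set.Icc (0:ℝ) 1 ∧ P q T S x = 0} := by
    rw [hrset]; exact Or.inr rfl
  obtain ⟨hrIcc, hPr⟩ := hrmem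
  rw [P_factor] at hPr
  have hQr : a * r ^ 2 + b * r + c = 0 := by
    rcases mul_eq_zero.1 hPr with h | h
    · exact absurd h hr0
    · exact h
  have huniq : ∀ z ∈ Set.Icc (0:ℝ) 1, a * z ^ 2 + b * z + c = 0 → z = r := by
    intro z hz hQz
    have hzmem : z ∈ {x : ℝ | x ∈ Set.Icc (0:ℝ) 1 ∧ P q T S x = 0} :=
      ⟨hz, by rw [P_factor, hQz, mul_zero]⟩
    rw [hrset] at hzmem
    rcases hzmem with rfl | rfl
    · exfalso; simp at hQz; linarith
    · rfl
  by_contra hd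
  have hsq : (2 * a * r + b) ^ 2 = b ^ 2 - 4 * a * c := by linear_combination 4 * a * hQr
  have h2ab : 2 * a * r + b ≠ 0 := by
    intro h; apply hd; rw [← hsq, h]; ring
  set r' : ℝ := -b / a - r with hr'
  have hQr' : a * r' ^ 2 + b * r' + c = 0 := by
    have : a * r' ^ 2 + b * r' + c = a * r ^ 2 + b * r + c := by
      rw [hr']; field_simp; ring
    rw [this, hQr]
  have hner : r' ≠ r := by
    intro h
    apply h2ab
    have : -b / a = 2 * r := by rw [hr'] at h; linarith
    have hb2 : -b = 2 * r * a := by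
      field_simp at this; linarith [this]
    linarith
  have hnotin : r' ∉ Set.Icc (0:ℝ) 1 := fun h => hner (huniq r' h hQr')
  have key := key_id hner hQr' hQr
  rw [hsum] at key
  -- r ∈ (0,1)
  have hrne0 : 0 < r := by
    rcases lt_or_eq_of_le hrIcc.1 with h | h
    · exact h
    · exfalso; apply hr0; exact h.symm
  have hrne1 : r < 1 := by
    rcases lt_or_eq_of_le hrIcc.2 with h | h
    · exact h
    · exfalso; rw [h] at hQr; nlinarith
  have ha2 : 0 < a ^ 2 := by positivity
  rw [Set.mem_Icc] at hnotin
  push_neg at hnotin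
  rcases le_or_gt 0 r' with h | h
  · have h1 : 1 < r' := hnotin h
    have t1 : 0 < r' * r := mul_pos (by linarith) hrne0
    have t2 : r' * r * (1 - r') < 0 := mul_neg_of_pos_of_neg t1 (by linarith)
    have t3 : r' * r * (1 - r') * (1 - r) < 0 := mul_neg_of_neg_of_pos t2 (by linarith)
    have t4 : a ^ 2 * (r' * r * (1 - r') * (1 - r)) < 0 := mul_neg_of_pos_of_neg ha2 t3
    have t5 : 0 < c * -q := mul_pos_of_neg_of_neg hc (by linarith)
    linarith [key]
  · have t1 : r' * r < 0 := mul_neg_of_neg_of_pos h hrne0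
    have t2 : r' * r * (1 - r') < 0 := mul_neg_of_neg_of_pos t1 (by linarith)
    have t3 : r' * r * (1 - r') * (1 - r) < 0 := mul_neg_of_neg_of_pos t2 (by linarith)
    have t4 : a ^ 2 * (r' * r * (1 - r') * (1 - r)) < 0 := mul_neg_of_pos_of_neg ha2 t3
    have t5 : 0 < c * -q := mul_pos_of_neg_of_neg hc (by linarith)
    linarith [key]

lemma quad_fin {A B C : ℝ} (hA : A ≠ 0) : {x : ℝ | A * x ^ 2 + B * x + C = 0}.Finite := by
  have hp : (Polynomial.C A * Polynomial.X ^ 2 + Polynomial.C B * Polynomial.X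
      + Polynomial.C C : Polynomial ℝ) ≠ 0 := by
    intro h
    have h2 := congrArg (fun p => Polynomial.coeff p 2) h
    simp [Polynomial.coeff_add, Polynomial.coeff_C_mul, Polynomial.coeff_X_pow,
      Polynomial.coeff_C] at h2
    exact hA h2
  refine (Polynomial.finite_setOf_isRoot hp).subset ?_
  intro x hx
  simp only [Set.mem_setOf_eq, Polynomial.IsRoot, Polynomial.eval_add, Polynomial.eval_mul,
    Polynomial.eval_pow, Polynomial.eval_C, Polynomial.eval_X]
  exact hx

lemma null_of_slices {f : ℝ × ℝ → ℝ} (hf : Continuous f)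
    (h : ∀ T : ℝ, {S : ℝ | f (T, S) = 0}.Finite) :
    volume {p : ℝ × ℝ | f p = 0} = 0 := by
  have hm : MeasurableSet {p : ℝ × ℝ | f p = 0} :=
    (isClosed_eq hf continuous_const).measurableSet
  rw [MeasureTheory.Measure.volume_eq_prod, MeasureTheory.Measure.measure_prod_null hm]
  filter_upwards with T
  show volume (Prod.mk T ⁻¹' {p : ℝ × ℝ | f p = 0}) = 0
  exact (h T).measure_zero volume

theorem PD_two_equilibria (q : ℝ) (hq0 : 0 < q) (hq2 : q < 1 / 2) :
    volume {p : ℝ × ℝ | p.1 ∈ Ioo (1 : ℝ) 2 ∧ p.2 ∈ Ioo (-1 : ℝ) 0 ∧ nRoots q p.1 p.2 = 2} =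
      ENNReal.ofReal
        (if q ≤ 1 / 3 then 3 * q / (2 * (1 - q)) else 3 - 1 / (2 * q * (1 - q))) := by
  have hq1 : (0:ℝ) < 1 - q := by linarith
  set f : ℝ → ℝ := fun T => max (-1) (-(q * T) / (1 - q)) with hfdef
  set A := {p : ℝ × ℝ | p.1 ∈ Ioo (1 : ℝ) 2 ∧ p.2 ∈ Ioo (-1 : ℝ) 0 ∧ nRoots q p.1 p.2 = 2}
    with hA
  set E := regionBetween f (fun _ => (0:ℝ)) (Ioo (1:ℝ) 2) with hE
  have hmemE : ∀ p : ℝ × ℝ, p ∈ E ↔ p.1 ∈ Ioo (1:ℝ) 2 ∧ f p.1 < p.2 ∧ p.2 < 0 := by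
    intro p
    simp [hE, regionBetween, Set.mem_Ioo, and_assoc]
  have hEA : E ⊆ A := by
    rintro ⟨T, S⟩ hp
    rw [hmemE] at hp
    obtain ⟨hT, hfS, hS0⟩ := hp
    have hS1 : (-1:ℝ) < S := lt_of_le_of_lt (le_max_left _ _) hfS
    have hdiv : -(q * T) / (1 - q) < S := lt_of_le_of_lt (le_max_right _ _) hfS
    have hc : 0 < S + q * (T - S) := by
      rw [div_lt_iff₀ hq1] at hdiv
      nlinarith
    exact ⟨hT, ⟨hS1, hS0⟩, nRoots_eq_two_of_pos hq0 hc⟩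
  set N1 := {p : ℝ × ℝ | p.2 + q * (p.1 - p.2) = 0} with hN1def
  set N2 := {p : ℝ × ℝ | p.1 + p.2 - 1 = 0} with hN2def
  set N3 := {p : ℝ × ℝ | (1 - p.1 - 2 * p.2 + q * (p.2 - 1 - p.1)) ^ 2
      - 4 * (p.1 + p.2 - 1) * (p.2 + q * (p.1 - p.2)) = 0} with hN3def
  have hAE : A ⊆ E ∪ (N1 ∪ N2 ∪ N3) := by
    rintro ⟨T, S⟩ ⟨hT, hS, hn⟩
    rcases lt_trichotomy (S + q * (T - S)) 0 with hc | hc | hc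
    · rcases eq_or_ne (T + S - 1) 0 with ha | ha
      · exact Or.inr (Or.inl (Or.inr ha))
      · exact Or.inr (Or.inr (disc_eq_zero_of hq0 hc ha hn))
    · exact Or.inr (Or.inl (Or.inl hc))
    · left
      rw [hmemE]
      refine ⟨hT, ?_, hS.2⟩
      apply max_lt hS.1
      rw [div_lt_iff₀ hq1]
      nlinarith
  have hN1 : volume N1 = 0 := by
    apply null_of_slices (by fun_prop)
    intro T
    apply Set.Finite.subset (Set.finite_singleton (-(q*T)/(1-q)))
    intro S hS
    simp only [Set.mem_setOf_eq] at hS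
    simp only [Set.mem_singleton_iff]
    rw [eq_div_iff (ne_of_gt hq1)]
    linear_combination hS
  have hN2 : volume N2 = 0 := by
    apply null_of_slices (by fun_prop)
    intro T
    apply Set.Finite.subset (Set.finite_singleton (1 - T))
    intro S hS
    simp only [Set.mem_setOf_eq] at hS
    simp only [Set.mem_singleton_iff]
    linarith
  have hN3 : volume N3 = 0 := by
    apply null_of_slices (by fun_prop)
    intro T
    have hid : ∀ S : ℝ, (1 - T - 2 * S + q * (S - 1 - T)) ^ 2
        - 4 * (T + S - 1) * (S + q * (T - S))
        = q ^ 2 * S ^ 2 + (2 * (q - 2) * (1 - T - q - q * T) - 4 * (q * T + (T - 1) * (1 - q))) * S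
          + ((1 - T - q - q * T) ^ 2 - 4 * (T - 1) * q * T) := by
      intro S; ring
    have hseteq : {S : ℝ | (1 - T - 2 * S + q * (S - 1 - T)) ^ 2
        - 4 * (T + S - 1) * (S + q * (T - S)) = 0}
        = {S : ℝ | q ^ 2 * S ^ 2
          + (2 * (q - 2) * (1 - T - q - q * T) - 4 * (q * T + (T - 1) * (1 - q))) * S
          + ((1 - T - q - q * T) ^ 2 - 4 * (T - 1) * q * T) = 0} :=
      Set.ext fun S => by rw [Set.mem_setOf_eq, Set.mem_setOf_eq, hid S]
    rw [hseteq]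
    exact quad_fin (pow_ne_zero 2 (ne_of_gt hq0))
  have hvol : volume A = volume E := by
    refine le_antisymm ?_ (measure_mono hEA)
    calc volume A ≤ volume (E ∪ (N1 ∪ N2 ∪ N3)) := measure_mono hAE
      _ ≤ volume E + volume (N1 ∪ N2 ∪ N3) := measure_union_le _ _
      _ = volume E := by
          rw [measure_union_null (measure_union_null hN1 hN2) hN3, add_zero]
  rw [hvol, hE, MeasureTheory.Measure.volume_eq_prod]
  have hfc : Continuous f := by
    rw [hfdef]; fun_prop
  have f_int : IntegrableOn f (Ioo (1:ℝ) 2) volume :=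
    (hfc.integrableOn_Icc).mono_set Set.Ioo_subset_Icc_self
  have g_int : IntegrableOn (fun _ : ℝ => (0:ℝ)) (Ioo (1:ℝ) 2) volume :=
    (continuous_const.integrableOn_Icc).mono_set Set.Ioo_subset_Icc_self
  have hfg : ∀ x ∈ Ioo (1:ℝ) 2, f x ≤ 0 := by
    intro x hx
    apply max_le (by norm_num)
    apply div_nonpos_of_nonpos_of_nonneg _ (le_of_lt hq1)
    nlinarith [hx.1]
  rw [volume_regionBetween_eq_integral f_int g_int measurableSet_Ioo hfg]
  congr 1
  have hmin : ∀ y : ℝ, ((fun _ : ℝ => (0:ℝ)) - f) y = min 1 (q * y / (1 - q)) := by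
    intro y
    simp only [Pi.sub_apply, hfdef, zero_sub]
    rw [← min_neg_neg]
    norm_num [neg_div]
  simp only [hmin]
  rw [← MeasureTheory.integral_Ioc_eq_integral_Ioo,
    ← intervalIntegral.integral_of_le (by norm_num : (1:ℝ) ≤ 2)]
  split_ifs with h3
  · have heq : Set.EqOn (fun y => min 1 (q * y / (1 - q))) (fun y => q / (1 - q) * y)
        (Set.uIcc (1:ℝ) 2) := by
      intro y hy
      rw [Set.uIcc_of_le (by norm_num)] at hy
      have hle : q * y / (1 - q) ≤ 1 := by
        rw [div_le_one hq1]
        nlinarith [hy.1, hy.2]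
      simp only
      rw [min_eq_right hle]; ring
    rw [intervalIntegral.integral_congr heq, intervalIntegral.integral_const_mul, integral_id]
    field_simp
    ring
  · set t : ℝ := (1 - q) / q with htdef
    have ht1 : 1 < t := by rw [htdef, lt_div_iff₀ hq0]; linarith
    have ht2 : t < 2 := by rw [htdef, div_lt_iff₀ hq0]; linarith [not_le.1 h3]
    have hcontmin : Continuous (fun y : ℝ => min 1 (q * y / (1 - q))) :=
      continuous_const.min (by fun_prop)
    have hsplit : ∫ y in (1:ℝ)..2, min 1 (q * y / (1 - q))
        = (∫ y in (1:ℝ)..t, min 1 (q * y / (1 - q)))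
          + ∫ y in t..2, min 1 (q * y / (1 - q)) :=
      (intervalIntegral.integral_add_adjacent_intervals
        (hcontmin.intervalIntegrable 1 t) (hcontmin.intervalIntegrable t 2)).symm
    rw [hsplit]
    have hqt : q * t = 1 - q := by
      rw [htdef]; field_simp
    have heq1 : Set.EqOn (fun y => min 1 (q * y / (1 - q))) (fun y => q / (1 - q) * y)
        (Set.uIcc (1:ℝ) t) := by
      intro y hy
      rw [Set.uIcc_of_le (le_of_lt ht1)] at hy
      have hle : q * y / (1 - q) ≤ 1 := by
        rw [div_le_one hq1]
        nlinarith [hy.2]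
      simp only
      rw [min_eq_right hle]; ring
    have heq2 : Set.EqOn (fun y => min 1 (q * y / (1 - q))) (fun _ => (1:ℝ))
        (Set.uIcc t 2) := by
      intro y hy
      rw [Set.uIcc_of_le (le_of_lt ht2)] at hy
      have hle : 1 ≤ q * y / (1 - q) := by
        rw [le_div_iff₀ hq1]
        nlinarith [hy.1]
      simp only
      rw [min_eq_left hle]
    rw [intervalIntegral.integral_congr heq1, intervalIntegral.integral_congr heq2,
      intervalIntegral.integral_const_mul, integral_id, intervalIntegral.integral_const]
    have hq0' : q ≠ 0 := ne_of_gt hq0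
    have hq1' : (1:ℝ) - q ≠ 0 := ne_of_gt hq1
    rw [htdef]
    field_simp
    ring_nf
    field_simp
    ring
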